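/- arXiv:2404.07361 — 3 statements merged into one kernel-verified Lean document; each statement's English description precedes it below -/
import Mathlib

section
/- A continuously differentiable function f : ℝ^d → ℝ^d has a scalar-valued potential (i.e., there exists F : ℝ^d → ℝ with ∇F = f) if and only if its Jacobian matrix is symmetric at every point. -/
open RealInnerProductSpace MeasureTheory

section Aux
variable {E : Type*} [NormedAddCommGroup E] [InnerProductSpace ℝ E] [CompleteSpace E]

lemma fwd_aux (f : E → E) (hf : ContDiff ℝ 1 f)
    (F : E → ℝ) (hF : ∀ x, gradient F x = f x) :
    ∀ x u v, ⟪fderiv ℝ f x u, v⟫ = ⟪u, fderiv ℝ f x v⟫ := by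
  classical
  set T : E →L[ℝ] StrongDual ℝ E :=
    (InnerProductSpace.toDual ℝ E).toContinuousLinearEquiv.toContinuousLinearMap with hT
  have hTapp : ∀ y w : E, T y w = ⟪y, w⟫ := fun y w => InnerProductSpace.toDual_apply_apply
  have hfd : ∀ y, fderiv ℝ F y = T (f y) := by
    intro y
    have := hF y
    rw [gradient] at this
    have : InnerProductSpace.toDual ℝ E ((InnerProductSpace.toDual ℝ E).symm (fderiv ℝ F y))
        = InnerProductSpace.toDual ℝ E (f y) := by rw [this]
    simpa [hT] using this
  set U : Set E := {y | f y ≠ 0} with hU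
  have hUopen : IsOpen U := isOpen_compl_iff.mpr (isClosed_singleton.preimage hf.continuous)
  have hDcont : Continuous (fderiv ℝ f) := hf.continuous_fderiv one_ne_zero
  -- symmetry on U
  have hsymU : ∀ x ∈ U, ∀ u v, ⟪fderiv ℝ f x u, v⟫ = ⟪u, fderiv ℝ f x v⟫ := by
    intro x hx u v
    have hev : ∀ᶠ y in nhds x, HasFDerivAt F (T (f y)) y := by
      filter_upwards [hUopen.mem_nhds hx] with y hy
      have hdiff : DifferentiableAt ℝ F y := by
        by_contra h
        have h0 : fderiv ℝ F y = 0 := fderiv_zero_of_not_differentiableAt h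
        rw [hfd y] at h0
        apply hy
        apply (InnerProductSpace.toDual ℝ E).injective
        rw [map_zero]
        exact h0
      have := hdiff.hasFDerivAt
      rwa [hfd y] at this
    have hx2 : HasFDerivAt (fun y => T (f y)) (T.comp (fderiv ℝ f x)) x :=
      T.hasFDerivAt.comp x (hf.differentiable one_ne_zero x).hasFDerivAt
    have := second_derivative_symmetric_of_eventually_of_real hev hx2 u v
    simp only [ContinuousLinearMap.comp_apply, hTapp] at this
    exact this.trans (real_inner_comm _ _)
  intro x u v
  by_cases hx : x ∈ closure U
  · set g : E → ℝ := fun y => ⟪fderiv ℝ f y u, v⟫ - ⟪u, fderiv ℝ f y v⟫ with hg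
    have c1 : Continuous fun y => fderiv ℝ f y u := hDcont.clm_apply continuous_const
    have c2 : Continuous fun y => fderiv ℝ f y v := hDcont.clm_apply continuous_const
    have hgcont : Continuous g := (c1.inner continuous_const).sub (continuous_const.inner c2)
    have hsub : closure U ⊆ g ⁻¹' {0} := by
      apply closure_minimal _ (isClosed_singleton.preimage hgcont)
      intro y hy
      simp [hg, hsymU y hy u v]
    have := hsub hx
    simp only [Set.mem_preimage, Set.mem_singleton_iff, hg, sub_eq_zero] at this
    exact this
  · have hx2 : x ∈ interior Uᶜ := by
      rw [interior_compl]
      exact hx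
    have hev : f =ᶠ[nhds x] (fun _ => 0) := by
      filter_upwards [isOpen_interior.mem_nhds hx2] with y hy
      have : y ∈ Uᶜ := interior_subset hy
      simpa [hU] using this
    have : fderiv ℝ f x = fderiv ℝ (fun _ : E => (0 : E)) x := hev.fderiv_eq
    rw [this, fderiv_fun_const]
    simp

end Aux

section Aux2
variable {E : Type*} [NormedAddCommGroup E] [InnerProductSpace ℝ E] [FiniteDimensional ℝ E]

lemma bwd_aux (f : E → E) (hf : ContDiff ℝ 1 f)
    (hsym : ∀ x u v, ⟪fderiv ℝ f x u, v⟫ = ⟪u, fderiv ℝ f x v⟫) (x₀ : E) :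
    HasGradientAt (fun x => ∫ t in (0:ℝ)..1, ⟪f (t • x), x⟫) (f x₀) x₀ := by
  classical
  set D := fderiv ℝ f with hD
  have hDcont : Continuous D := hf.continuous_fderiv one_ne_zero
  have hfc : Continuous f := hf.continuous
  set F' : E → ℝ → E →L[ℝ] ℝ :=
    fun x t => innerSL ℝ (f (t • x)) + (innerSL ℝ x).comp (t • D (t • x)) with hF'
  -- pointwise differentiability in x
  have hderiv : ∀ (t : ℝ) (x : E),
      HasFDerivAt (fun x => ⟪f (t • x), x⟫) (F' x t) x := by
    intro t x
    have hs : HasFDerivAt (fun x : E => t • x) (t • ContinuousLinearMap.id ℝ E) x :=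
      (hasFDerivAt_id x).const_smul t
    have hft : HasFDerivAt (fun x => f (t • x)) ((D (t • x)).comp (t • ContinuousLinearMap.id ℝ E)) x :=
      ((hf.differentiable one_ne_zero (t • x)).hasFDerivAt).comp x hs
    have h := hft.inner ℝ (hasFDerivAt_id x)
    refine h.congr_fderiv ?_
    ext w
    simp [F', fderivInnerCLM_apply, real_inner_comm, mul_comm, real_inner_smul_left,
      real_inner_smul_right]
  -- continuity of F' in (t) for fixed x (and joint pieces)
  have hF'cont : ∀ x : E, Continuous fun t => F' x t := by
    intro x
    have h1 : Continuous fun t : ℝ => innerSL ℝ (f (t • x)) :=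
      (innerSL ℝ).continuous.comp (hfc.comp (continuous_id.smul continuous_const))
    have h2 : Continuous fun t : ℝ => t • D (t • x) :=
      continuous_id.smul (hDcont.comp (continuous_id.smul continuous_const))
    have h3 : Continuous fun t : ℝ => (innerSL ℝ x).comp (t • D (t • x)) :=
      ((ContinuousLinearMap.compL ℝ E E ℝ (innerSL ℝ x)).continuous).comp h2
    exact h1.add h3
  -- bounds
  set R : ℝ := ‖x₀‖ + 1 with hR
  have hR0 : 0 < R := by positivity
  obtain ⟨C₁, hC₁⟩ := (isCompact_closedBall (0:E) R).exists_bound_of_continuousOn hfc.continuousOn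
  obtain ⟨C₂, hC₂⟩ := (isCompact_closedBall (0:E) R).exists_bound_of_continuousOn hDcont.continuousOn
  have hC₂0 : 0 ≤ C₂ := le_trans (norm_nonneg _) (hC₂ 0 (by simp [hR0.le]))
  have hmem : ∀ t : ℝ, t ∈ Set.uIoc (0:ℝ) 1 → ∀ x ∈ Metric.ball x₀ 1,
      ‖x‖ ≤ R ∧ t • x ∈ Metric.closedBall (0:E) R ∧ 0 < t ∧ t ≤ 1 := by
    intro t ht x hx
    rw [Set.uIoc_of_le (by norm_num : (0:ℝ) ≤ 1)] at ht
    have hxn : ‖x‖ ≤ R := by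
      have := mem_ball_iff_norm.mp hx
      have h2 := norm_sub_norm_le x x₀
      rw [hR]; linarith
    refine ⟨hxn, ?_, ht.1, ht.2⟩
    rw [Metric.mem_closedBall, dist_zero_right, norm_smul]
    calc ‖t‖ * ‖x‖ ≤ 1 * R := by
          apply mul_le_mul _ hxn (norm_nonneg _) zero_le_one
          rw [Real.norm_eq_abs, abs_of_pos ht.1]; exact ht.2
      _ = R := one_mul R
  have h_bound : ∀ t : ℝ, t ∈ Set.uIoc (0:ℝ) 1 → ∀ x ∈ Metric.ball x₀ 1,
      ‖F' x t‖ ≤ C₁ + R * C₂ := by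
    intro t ht x hx
    obtain ⟨hxn, hsm, ht0, ht1⟩ := hmem t ht x hx
    have e1 : ‖innerSL ℝ (f (t • x))‖ ≤ C₁ := by
      rw [innerSL_apply_norm]; exact hC₁ _ hsm
    have e2 : ‖(innerSL ℝ x).comp (t • D (t • x))‖ ≤ R * C₂ := by
      calc ‖(innerSL ℝ x).comp (t • D (t • x))‖
          ≤ ‖innerSL ℝ x‖ * ‖t • D (t • x)‖ := ContinuousLinearMap.opNorm_comp_le _ _
        _ = ‖x‖ * (‖t‖ * ‖D (t • x)‖) := by rw [innerSL_apply_norm, norm_smul]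
        _ ≤ R * (1 * C₂) := by
            apply mul_le_mul hxn _ (by positivity) hR0.le
            apply mul_le_mul _ (hC₂ _ hsm) (norm_nonneg _) zero_le_one
            rw [Real.norm_eq_abs, abs_of_pos ht0]; exact ht1
        _ = R * C₂ := by ring
    calc ‖F' x t‖ ≤ ‖innerSL ℝ (f (t • x))‖ + ‖(innerSL ℝ x).comp (t • D (t • x))‖ :=
          norm_add_le _ _
      _ ≤ C₁ + R * C₂ := add_le_add e1 e2
  -- continuity of integrand in t for each x
  have hcont_t : ∀ x : E, Continuous fun t : ℝ => ⟪f (t • x), x⟫ :=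
    fun x => (hfc.comp (continuous_id.smul continuous_const)).inner continuous_const
  -- main derivative
  have hmain : HasFDerivAt (fun x => ∫ t in (0:ℝ)..1, ⟪f (t • x), x⟫)
      (∫ t in (0:ℝ)..1, F' x₀ t) x₀ := by
    apply intervalIntegral.hasFDerivAt_integral_of_dominated_of_fderiv_le
      (hs := Metric.ball_mem_nhds x₀ one_pos) (bound := fun _ => C₁ + R * C₂)
    · exact Filter.Eventually.of_forall fun x => ((hcont_t x).aestronglyMeasurable).restrict
    · exact (hcont_t x₀).intervalIntegrable 0 1
    · exact ((hF'cont x₀).aestronglyMeasurable).restrict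
    · exact Filter.Eventually.of_forall h_bound
    · exact intervalIntegrable_const
    · exact Filter.Eventually.of_forall fun t ht x hx => hderiv t x
  -- identify the derivative
  have hint : IntervalIntegrable (fun t => F' x₀ t) volume 0 1 :=
    (hF'cont x₀).intervalIntegrable 0 1
  have hkey : (∫ t in (0:ℝ)..1, F' x₀ t) = innerSL ℝ (f x₀) := by
    ext w
    rw [ContinuousLinearMap.intervalIntegral_apply hint w]
    have hg : ∀ t : ℝ, HasDerivAt (fun t => t * ⟪f (t • x₀), w⟫) (F' x₀ t w) t := by
      intro t
      have hsmul : HasDerivAt (fun t : ℝ => t • x₀) x₀ t := by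
        simpa using (hasDerivAt_id t).smul_const x₀
      have hc : HasDerivAt (fun t => f (t • x₀)) (D (t • x₀) x₀) t :=
        ((hf.differentiable one_ne_zero (t • x₀)).hasFDerivAt).comp_hasDerivAt t hsmul
      have hinner : HasDerivAt (fun t => ⟪f (t • x₀), w⟫) (⟪D (t • x₀) x₀, w⟫) t := by
        simpa using hc.inner ℝ (hasDerivAt_const t w)
      have := (hasDerivAt_id t).mul hinner
      refine this.congr_deriv ?_
      have hs := hsym (t • x₀) x₀ w
      simp only [F', ContinuousLinearMap.add_apply, innerSL_apply_apply, ContinuousLinearMap.comp_apply,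
        ContinuousLinearMap.smul_apply, real_inner_smul_right, id_eq, one_mul]
      rw [← hs]
    have hintw : IntervalIntegrable (fun t => F' x₀ t w) volume 0 1 := by
      exact (((hF'cont x₀).clm_apply continuous_const).intervalIntegrable 0 1)
    have := intervalIntegral.integral_eq_sub_of_hasDerivAt
      (fun t _ => hg t) hintw
    rw [this]
    simp
  rw [hkey] at hmain
  rw [hasGradientAt_iff_hasFDerivAt]
  exact hmain

end Aux2

/-- A C¹ map f : ℝ^d → ℝ^d has a scalar potential iff its Jacobian is symmetric everywhere. -/
theorem gradnet_symmetric_jacobian_iff_potential (d : ℕ)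
    (f : EuclideanSpace ℝ (Fin d) → EuclideanSpace ℝ (Fin d))
    (hf : ContDiff ℝ 1 f) :
    (∃ F : EuclideanSpace ℝ (Fin d) → ℝ, ∀ x, gradient F x = f x) ↔
      (∀ x u v, ⟪fderiv ℝ f x u, v⟫ = ⟪u, fderiv ℝ f x v⟫) := by
  constructor
  · rintro ⟨F, hF⟩
    exact fwd_aux f hf F hF
  · intro hsym
    exact ⟨_, fun x => (bwd_aux f hf hsym x).gradient⟩
end

section
/- Let f : [0,1] → ℝ be continuous and nondecreasing, and let σ : ℝ → [0,1] be continuous, nondecreasing with σ(x) → 0 as x → −∞ and σ(x) → 1 as x → +∞. Then for every ε > 0 there exist n ∈ ℕ, t ≥ 1, and nonnegative coefficients Δ_i such that g(x) = f(0) + ∑_{i=1}^{2^n} Δ_i · σ(t(2^{n+1}x − 2i + 1)) satisfies sup_{x∈[0,1]} |f(x) − g(x)| < ε. -/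
set_option maxHeartbeats 1000000


/-- Universal approximation of continuous nondecreasing functions on [0,1] by sums of
shifted, scaled sigmoidal functions. -/
theorem monotone_scalar_universal_approximation
    (f : ℝ → ℝ) (hfcont : ContinuousOn f (Set.Icc 0 1))
    (hfmono : MonotoneOn f (Set.Icc 0 1))
    (σ : ℝ → ℝ) (hσcont : Continuous σ) (hσmono : Monotone σ)
    (hσrange : ∀ x, σ x ∈ Set.Icc (0:ℝ) 1)
    (hσbot : Filter.Tendsto σ Filter.atBot (nhds 0))
    (hσtop : Filter.Tendsto σ Filter.atTop (nhds 1))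
    (ε : ℝ) (hε : 0 < ε) :
    ∃ (n : ℕ) (t : ℝ) (Δ : Fin (2 ^ n) → ℝ),
      1 ≤ t ∧ (∀ i, 0 ≤ Δ i) ∧
      ∀ x ∈ Set.Icc (0:ℝ) 1,
        |f x - (f 0 + ∑ i : Fin (2 ^ n),
          Δ i * σ (t * (2 ^ (n + 1) * x - 2 * ((i : ℝ) + 1) + 1)))| < ε := by
  -- uniform continuity
  obtain ⟨δ₀, hδ₀pos, hδ₀⟩ := Metric.uniformContinuousOn_iff.mp
    (isCompact_Icc.uniformContinuousOn_of_continuous hfcont) (ε/3) (by positivity)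
  obtain ⟨n, hn⟩ := exists_pow_lt_of_lt_one hδ₀pos (by norm_num : (1:ℝ)/2 < 1)
  have hNpos : (0:ℝ) < (2:ℝ)^n := by positivity
  have hNδ : (1:ℝ)/(2:ℝ)^n < δ₀ := by
    have h : ((1:ℝ)/2)^n = 1/(2:ℝ)^n := by rw [div_pow, one_pow]
    linarith [hn, h.le, h.ge]
  set M : ℝ := f 1 - f 0 with hMdef
  have h01 : (0:ℝ) ∈ Set.Icc (0:ℝ) 1 := by norm_num
  have h11 : (1:ℝ) ∈ Set.Icc (0:ℝ) 1 := by norm_num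
  have hM0 : 0 ≤ M := sub_nonneg.2 (hfmono h01 h11 (by norm_num))
  set δ' : ℝ := ε / (3 * (M + 1)) with hδ'def
  have hδ'pos : 0 < δ' := by positivity
  have hδ'M : δ' * M < ε/3 := by
    rw [hδ'def, div_mul_eq_mul_div, div_lt_div_iff₀ (by positivity) (by norm_num)]
    nlinarith
  -- choose t
  obtain ⟨T₁, hT₁⟩ := Filter.eventually_atTop.mp
    (hσtop.eventually (eventually_gt_nhds (by linarith : 1 - δ' < 1)))
  obtain ⟨T₂, hT₂⟩ := Filter.eventually_atBot.mp
    (hσbot.eventually (eventually_lt_nhds hδ'pos))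
  set t : ℝ := max 1 (max T₁ (-T₂)) with htdef
  have ht1 : 1 ≤ t := le_max_left _ _
  have htT₁ : T₁ ≤ t := le_trans (le_max_left _ _) (le_max_right _ _)
  have htT₂ : -t ≤ T₂ := by
    have : -T₂ ≤ t := le_trans (le_max_right _ _) (le_max_right _ _)
    linarith
  have htpos : 0 < t := lt_of_lt_of_le one_pos ht1
  -- membership in Icc of dyadic points
  have hmem : ∀ j : ℕ, j ≤ 2^n → ((j:ℝ)/(2:ℝ)^n) ∈ Set.Icc (0:ℝ) 1 := by
    intro j hj
    constructor
    · positivity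
    · rw [div_le_one hNpos]
      calc (j:ℝ) ≤ ((2^n : ℕ) : ℝ) := by exact_mod_cast hj
        _ = (2:ℝ)^n := by push_cast; ring
  -- coefficients
  refine ⟨n, t, fun i => f (((i:ℝ)+1)/(2:ℝ)^n) - f ((i:ℝ)/(2:ℝ)^n), ht1, ?_, ?_⟩
  · intro i
    have hi : (i:ℕ) < 2^n := i.isLt
    refine sub_nonneg.2 (hfmono (hmem i (le_of_lt hi)) ?_ ?_)
    · have h : ((i:ℝ)+1) = ((i+1 : ℕ) : ℝ) := by push_cast; ring
      rw [h]; exact hmem (i+1) hi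
    · gcongr
      linarith
  intro x hx
  obtain ⟨hx0, hx1⟩ := hx
  -- rewrite sum over range
  set G : ℕ → ℝ := fun j =>
    (f (((j:ℝ)+1)/(2:ℝ)^n) - f ((j:ℝ)/(2:ℝ)^n)) *
      σ (t * (2 ^ (n + 1) * x - 2 * ((j : ℝ) + 1) + 1)) with hGdef
  have hsum : ∑ i : Fin (2^n), (f (((i:ℝ)+1)/(2:ℝ)^n) - f ((i:ℝ)/(2:ℝ)^n)) *
      σ (t * (2 ^ (n + 1) * x - 2 * ((i : ℝ) + 1) + 1)) = ∑ j ∈ Finset.range (2^n), G j := by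
    rw [← Fin.sum_univ_eq_sum_range G (2^n)]
  rw [hsum]
  set N : ℕ := 2^n with hNdef
  have hNcast : ((N:ℕ):ℝ) = (2:ℝ)^n := by rw [hNdef]; push_cast; ring
  -- the floor
  set k : ℕ := ⌊(2:ℝ)^n * x⌋₊ with hkdef
  have hxN0 : 0 ≤ (2:ℝ)^n * x := by positivity
  have hk1 : (k:ℝ) ≤ (2:ℝ)^n * x := Nat.floor_le hxN0
  have hk2 : (2:ℝ)^n * x < (k:ℝ) + 1 := Nat.lt_floor_add_one _
  have hkN : k ≤ N := by
    have h : (2:ℝ)^n * x ≤ ((N:ℕ):ℝ) := by rw [hNcast]; nlinarith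
    calc k = ⌊(2:ℝ)^n * x⌋₊ := rfl
      _ ≤ ⌊((N:ℕ):ℝ)⌋₊ := Nat.floor_le_floor h
      _ = N := Nat.floor_natCast N
  -- Δ' and telescoping
  set Δ' : ℕ → ℝ := fun j => f (((j:ℝ)+1)/(2:ℝ)^n) - f ((j:ℝ)/(2:ℝ)^n) with hΔ'def
  have hΔ'nonneg : ∀ j, j < N → 0 ≤ Δ' j := by
    intro j hj
    refine sub_nonneg.2 (hfmono (hmem j (le_of_lt hj)) ?_ ?_)
    · have h : ((j:ℝ)+1) = ((j+1 : ℕ) : ℝ) := by push_cast; ring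
      rw [h]; exact hmem (j+1) hj
    · gcongr; linarith
  have htel : ∀ m : ℕ, ∑ j ∈ Finset.range m, Δ' j = f ((m:ℝ)/(2:ℝ)^n) - f 0 := by
    intro m
    have h := Finset.sum_range_sub (fun j => f ((j:ℝ)/(2:ℝ)^n)) m
    rw [show ∑ j ∈ Finset.range m, Δ' j
        = ∑ j ∈ Finset.range m, (f (((j+1:ℕ):ℝ)/(2:ℝ)^n) - f ((j:ℝ)/(2:ℝ)^n)) from by
      apply Finset.sum_congr rfl; intro j _; rw [hΔ'def]; push_cast; ring_nf]
    rw [h]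
    norm_num
  -- sigma bounds
  have hσ01 : ∀ y, 0 ≤ σ y ∧ σ y ≤ 1 := fun y => ⟨(hσrange y).1, (hσrange y).2⟩
  have hGnonneg : ∀ j, j < N → 0 ≤ G j := by
    intro j hj
    exact mul_nonneg (hΔ'nonneg j hj) (hσ01 _).1
  have hpow : (2:ℝ)^(n+1) = 2 * (2:ℝ)^n := by ring
  -- case i < k : σ ≥ 1 - δ'
  have hσhi : ∀ j : ℕ, j < k → 1 - δ' < σ (t * (2 ^ (n + 1) * x - 2 * ((j : ℝ) + 1) + 1)) := by
    intro j hj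
    apply hT₁
    have hjk : (j:ℝ) + 1 ≤ (k:ℝ) := by exact_mod_cast hj
    have harg : 1 ≤ 2 ^ (n + 1) * x - 2 * ((j : ℝ) + 1) + 1 := by
      rw [hpow]; nlinarith
    calc T₁ ≤ t := htT₁
      _ = t * 1 := (mul_one t).symm
      _ ≤ t * (2 ^ (n + 1) * x - 2 * ((j : ℝ) + 1) + 1) := by
          exact mul_le_mul_of_nonneg_left harg (le_of_lt htpos)
  -- case i > k : σ ≤ δ'
  have hσlo : ∀ j : ℕ, k < j → σ (t * (2 ^ (n + 1) * x - 2 * ((j : ℝ) + 1) + 1)) < δ' := by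
    intro j hj
    apply hT₂
    have hjk : (k:ℝ) + 1 ≤ (j:ℝ) := by exact_mod_cast hj
    have harg : 2 ^ (n + 1) * x - 2 * ((j : ℝ) + 1) + 1 ≤ -1 := by
      rw [hpow]; nlinarith
    calc t * (2 ^ (n + 1) * x - 2 * ((j : ℝ) + 1) + 1) ≤ t * (-1) := by
          exact mul_le_mul_of_nonneg_left harg (le_of_lt htpos)
      _ = -t := by ring
      _ ≤ T₂ := htT₂
  -- lower bound on S
  set S : ℝ := ∑ j ∈ Finset.range N, G j with hSdef
  clear_value S G Δ' k N t M δ'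
  have hSlo : (1 - δ') * (f ((k:ℝ)/(2:ℝ)^n) - f 0) ≤ S := by
    have h1 : ∑ j ∈ Finset.range k, G j ≤ S := by
      rw [hSdef]
      apply Finset.sum_le_sum_of_subset_of_nonneg
      · exact Finset.range_subset_range.2 hkN
      · intro j hj _
        exact hGnonneg j (Finset.mem_range.1 hj)
    have h2 : ∑ j ∈ Finset.range k, (1 - δ') * Δ' j ≤ ∑ j ∈ Finset.range k, G j := by
      apply Finset.sum_le_sum
      intro j hj
      have hjk := Finset.mem_range.1 hj
      have hs := hσhi j hjk
      have hΔ := hΔ'nonneg j (lt_of_lt_of_le hjk hkN)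
      rw [hGdef]
      simp only [hΔ'def]
      rw [mul_comm (1 - δ')]
      exact mul_le_mul_of_nonneg_left (le_of_lt hs) (by simpa [hΔ'def] using hΔ)
    rw [← Finset.mul_sum, htel k] at h2
    linarith
  -- upper bound on S
  have hfkM : f ((k:ℝ)/(2:ℝ)^n) - f 0 ≤ M := by
    rw [hMdef]
    have h := hfmono (hmem k hkN) h11 (hmem k hkN).2
    linarith
  have hΔmid : k < N → Δ' k < ε/3 := by
    intro hkN'
    have h1 : ((k:ℝ)+1)/(2:ℝ)^n ∈ Set.Icc (0:ℝ) 1 := by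
      have h : ((k:ℝ)+1) = ((k+1 : ℕ) : ℝ) := by push_cast; ring
      rw [h]; exact hmem (k+1) hkN'
    have h2 := hmem k hkN
    have hd : dist (((k:ℝ)+1)/(2:ℝ)^n) ((k:ℝ)/(2:ℝ)^n) < δ₀ := by
      rw [Real.dist_eq]
      have h : ((k:ℝ)+1)/(2:ℝ)^n - (k:ℝ)/(2:ℝ)^n = 1/(2:ℝ)^n := by field_simp; ring
      rw [h, abs_of_pos (by positivity)]
      exact hNδ
    have h3 := hδ₀ _ h1 _ h2 hd
    rw [Real.dist_eq] at h3
    calc Δ' k ≤ |f (((k:ℝ)+1)/(2:ℝ)^n) - f ((k:ℝ)/(2:ℝ)^n)| := by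
          simp only [hΔ'def]; exact le_abs_self _
      _ < ε/3 := h3
  have hShi : S ≤ (f ((k:ℝ)/(2:ℝ)^n) - f 0) + (if k < N then Δ' k else 0) + δ' * M := by
    have hsplit : S = ∑ j ∈ Finset.range k, G j + ∑ j ∈ Finset.Ico k N, G j := by
      rw [hSdef, Finset.range_eq_Ico, ← Finset.sum_Ico_consecutive _ (Nat.zero_le k) hkN, Finset.range_eq_Ico]
    have h1 : ∑ j ∈ Finset.range k, G j ≤ f ((k:ℝ)/(2:ℝ)^n) - f 0 := by
      rw [← htel k]
      apply Finset.sum_le_sum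
      intro j hj
      have hjk := Finset.mem_range.1 hj
      have hΔ := hΔ'nonneg j (lt_of_lt_of_le hjk hkN)
      calc G j ≤ Δ' j * 1 := by
            rw [hGdef]; simp only [hΔ'def]
            exact mul_le_mul_of_nonneg_left (hσ01 _).2 (by simpa [hΔ'def] using hΔ)
        _ = Δ' j := mul_one _
    rcases lt_or_ge k N with hkN' | hkN'
    · have h2 : ∑ j ∈ Finset.Ico k N, G j = G k + ∑ j ∈ Finset.Ico (k+1) N, G j := by
        rw [Finset.sum_eq_sum_Ico_succ_bot hkN']
      have h3 : ∑ j ∈ Finset.Ico (k+1) N, G j ≤ δ' * M := by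
        have hb : ∑ j ∈ Finset.Ico (k+1) N, G j ≤ ∑ j ∈ Finset.Ico (k+1) N, δ' * Δ' j := by
          apply Finset.sum_le_sum
          intro j hj
          obtain ⟨hj1, hj2⟩ := Finset.mem_Ico.1 hj
          have hΔ := hΔ'nonneg j hj2
          have hσj := hσlo j (by omega)
          rw [hGdef]; simp only [hΔ'def]
          calc (f (((j:ℝ)+1)/(2:ℝ)^n) - f ((j:ℝ)/(2:ℝ)^n)) *
                σ (t * (2 ^ (n + 1) * x - 2 * ((j : ℝ) + 1) + 1))
              ≤ (f (((j:ℝ)+1)/(2:ℝ)^n) - f ((j:ℝ)/(2:ℝ)^n)) * δ' :=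
                mul_le_mul_of_nonneg_left (le_of_lt hσj) (by simpa [hΔ'def] using hΔ)
            _ = δ' * (f (((j:ℝ)+1)/(2:ℝ)^n) - f ((j:ℝ)/(2:ℝ)^n)) := mul_comm _ _
        have hc : ∑ j ∈ Finset.Ico (k+1) N, Δ' j ≤ M := by
          rw [Finset.sum_Ico_eq_sub Δ' (by omega : k+1 ≤ N), htel N, htel (k+1)]
          have hfk1 : f 0 ≤ f (((k+1:ℕ):ℝ)/(2:ℝ)^n) :=
            hfmono h01 (hmem (k+1) hkN') (hmem (k+1) hkN').1
          have hfN : f (((N:ℕ):ℝ)/(2:ℝ)^n) = f 1 := by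
            rw [hNcast, div_self (ne_of_gt hNpos)]
          rw [hfN, hMdef]
          push_cast
          push_cast at hfk1
          linarith
        rw [← Finset.mul_sum] at hb
        calc ∑ j ∈ Finset.Ico (k+1) N, G j ≤ δ' * ∑ j ∈ Finset.Ico (k+1) N, Δ' j := hb
          _ ≤ δ' * M := mul_le_mul_of_nonneg_left hc (le_of_lt hδ'pos)
      have h4 : G k ≤ Δ' k := by
        have hΔ := hΔ'nonneg k hkN'
        calc G k ≤ Δ' k * 1 := by
              rw [hGdef]; simp only [hΔ'def]
              exact mul_le_mul_of_nonneg_left (hσ01 _).2 (by simpa [hΔ'def] using hΔ)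
          _ = Δ' k := mul_one _
      rw [hsplit, if_pos hkN']
      linarith
    · have hkN'' : k = N := le_antisymm hkN hkN'
      rw [hsplit, if_neg (by omega)]
      have he : Finset.Ico k N = ∅ := by rw [hkN'']; simp
      rw [he, Finset.sum_empty]
      have h5 : 0 ≤ δ' * M := mul_nonneg (le_of_lt hδ'pos) hM0
      linarith
  -- relate f x and f (k/2^n)
  have hkx : (k:ℝ)/(2:ℝ)^n ≤ x := by
    rw [div_le_iff₀ hNpos]
    calc (k:ℝ) ≤ (2:ℝ)^n * x := hk1
      _ = x * (2:ℝ)^n := mul_comm _ _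
  have hfkx : f ((k:ℝ)/(2:ℝ)^n) ≤ f x := hfmono (hmem k hkN) ⟨hx0, hx1⟩ hkx
  have hfxk : f x - f ((k:ℝ)/(2:ℝ)^n) < ε/3 := by
    have hd : dist x ((k:ℝ)/(2:ℝ)^n) < δ₀ := by
      rw [Real.dist_eq, abs_of_nonneg (by linarith)]
      have hlt : x - (k:ℝ)/(2:ℝ)^n < 1/(2:ℝ)^n := by
        rw [sub_lt_iff_lt_add, ← add_div, lt_div_iff₀ hNpos, mul_comm]
        linarith
      linarith
    have h := hδ₀ _ ⟨hx0, hx1⟩ _ (hmem k hkN) hd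
    rw [Real.dist_eq] at h
    calc f x - f ((k:ℝ)/(2:ℝ)^n) ≤ |f x - f ((k:ℝ)/(2:ℝ)^n)| := le_abs_self _
      _ < ε/3 := h
  -- final estimate
  rw [abs_lt]
  have hfk0 : 0 ≤ f ((k:ℝ)/(2:ℝ)^n) - f 0 :=
    sub_nonneg.2 (hfmono h01 (hmem k hkN) (hmem k hkN).1)
  have hmid : (if k < N then Δ' k else 0) < ε/3 := by
    split
    · exact hΔmid (by assumption)
    · positivity
  constructor
  · nlinarith [hShi, hδ'M, hmid, hfkx]
  · nlinarith [hSlo, hδ'M, hfxk, hfkM, hδ'pos]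
end

section
/- Consider the map h(x) = ρ(φ(Wx + b)) · Wᵀ σ(Wx + b) where σ = ∇φ, φ : ℝ^m → ℝ is convex and twice differentiable, ρ : ℝ → ℝ_{≥0} is differentiable, nondecreasing, and nonnegative. Then the Jacobian of h at every x is symmetric positive semidefinite; in particular, h is monotone. -/
open RealInnerProductSpace Matrix

set_option maxHeartbeats 1000000

noncomputable def innerCLM (n : ℕ) :
    EuclideanSpace ℝ (Fin n) →L[ℝ] (EuclideanSpace ℝ (Fin n) →L[ℝ] ℝ) :=
  LinearMap.toContinuousLinearMap
    { toFun := fun v => innerSL ℝ v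
      map_add' := fun v w => by ext u; simp [inner_add_left]
      map_smul' := fun c v => by ext u; simp [real_inner_smul_left] }

@[simp] lemma innerCLM_apply (n : ℕ) (v u : EuclideanSpace ℝ (Fin n)) :
    innerCLM n v u = ⟪v, u⟫ := rfl

/-- A module h(x) = ρ(φ(Wx+b))·Wᵀσ(Wx+b) with σ = ∇φ, φ convex and C², and ρ
differentiable, nondecreasing, nonnegative, has an everywhere symmetric PSD Jacobian;
in particular h is monotone. -/
theorem gradnet_module_psd_jacobian (m d : ℕ)
    (φ : EuclideanSpace ℝ (Fin m) → ℝ) (hφ : ContDiff ℝ 2 φ)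
    (hφconv : ConvexOn ℝ Set.univ φ)
    (σ : EuclideanSpace ℝ (Fin m) → EuclideanSpace ℝ (Fin m))
    (hσ : ∀ z, gradient φ z = σ z)
    (ρ : ℝ → ℝ) (hρdiff : Differentiable ℝ ρ) (hρmono : Monotone ρ)
    (hρnonneg : ∀ s, 0 ≤ ρ s)
    (W : Matrix (Fin m) (Fin d) ℝ) (b : EuclideanSpace ℝ (Fin m)) :
    (∀ (x u v : EuclideanSpace ℝ (Fin d)),
      ⟪fderiv ℝ (fun x => ρ (φ (Matrix.toEuclideanLin W x + b)) •
          Matrix.toEuclideanLin Wᵀ (σ (Matrix.toEuclideanLin W x + b))) x u, v⟫ =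
      ⟪u, fderiv ℝ (fun x => ρ (φ (Matrix.toEuclideanLin W x + b)) •
          Matrix.toEuclideanLin Wᵀ (σ (Matrix.toEuclideanLin W x + b))) x v⟫) ∧
    (∀ (x u : EuclideanSpace ℝ (Fin d)),
      0 ≤ ⟪fderiv ℝ (fun x => ρ (φ (Matrix.toEuclideanLin W x + b)) •
          Matrix.toEuclideanLin Wᵀ (σ (Matrix.toEuclideanLin W x + b))) x u, u⟫) ∧
    (∀ (x y : EuclideanSpace ℝ (Fin d)),
      0 ≤ ⟪(ρ (φ (Matrix.toEuclideanLin W x + b)) •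
              Matrix.toEuclideanLin Wᵀ (σ (Matrix.toEuclideanLin W x + b))) -
            (ρ (φ (Matrix.toEuclideanLin W y + b)) •
              Matrix.toEuclideanLin Wᵀ (σ (Matrix.toEuclideanLin W y + b))), x - y⟫) := by
  classical
  set h : EuclideanSpace ℝ (Fin d) → EuclideanSpace ℝ (Fin d) :=
    fun x => ρ (φ (Matrix.toEuclideanLin W x + b)) •
      Matrix.toEuclideanLin Wᵀ (σ (Matrix.toEuclideanLin W x + b)) with hh
  set Wc : EuclideanSpace ℝ (Fin d) →L[ℝ] EuclideanSpace ℝ (Fin m) :=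
    LinearMap.toContinuousLinearMap (Matrix.toEuclideanLin W) with hWc
  set Tc : EuclideanSpace ℝ (Fin m) →L[ℝ] EuclideanSpace ℝ (Fin d) :=
    LinearMap.toContinuousLinearMap (Matrix.toEuclideanLin Wᵀ) with hTc
  have hφdiff : Differentiable ℝ φ := hφ.differentiable (by norm_num)
  have hAder : ∀ x, HasFDerivAt (fun x => Matrix.toEuclideanLin W x + b) Wc x := by
    intro x
    exact (Wc.hasFDerivAt (x := x)).add_const b
  have hAdiff : Differentiable ℝ (fun x => Matrix.toEuclideanLin W x + b) :=
    fun x => (hAder x).differentiableAt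
  have hgrad : ∀ z w, fderiv ℝ φ z w = ⟪σ z, w⟫ := by
    intro z w
    rw [← hσ z]
    have e : InnerProductSpace.toDual ℝ _ (gradient φ z) = fderiv ℝ φ z :=
      (InnerProductSpace.toDual ℝ _).apply_symm_apply _
    rw [← e, InnerProductSpace.toDual_apply_apply]
  have hadj : ∀ (s : EuclideanSpace ℝ (Fin m)) (u : EuclideanSpace ℝ (Fin d)),
      ⟪Matrix.toEuclideanLin Wᵀ s, u⟫ = ⟪s, Matrix.toEuclideanLin W u⟫ := by
    intro s u
    have h1 : Wᵀ = Wᴴ := by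
      ext i j; simp [Matrix.conjTranspose]
    rw [h1, Matrix.toEuclideanLin_conjTranspose_eq_adjoint]
    exact LinearMap.adjoint_inner_left _ _ _
  -- differentiability of σ
  have hfd : Differentiable ℝ (fderiv ℝ φ) :=
    (hφ.fderiv_right (m := 1) (by norm_num)).differentiable one_ne_zero
  have hrep : σ = fun z => ∑ i, (fderiv ℝ φ z (EuclideanSpace.single i (1:ℝ))) •
      EuclideanSpace.single i (1:ℝ) := by
    funext z
    ext i
    have e := hgrad z (EuclideanSpace.single i (1:ℝ))
    simp only [EuclideanSpace.inner_single_right, starRingEnd_apply, star_trivial,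
      one_mul] at e
    rw [WithLp.ofLp_sum, Finset.sum_apply]
    simp [PiLp.smul_apply, EuclideanSpace.single_apply, e]
  have hσdiff : Differentiable ℝ σ := by
    rw [hrep]
    exact Differentiable.fun_sum fun i _ =>
      (hfd.clm_apply (differentiable_const _)).smul_const _
  have hhdiff : Differentiable ℝ h := by
    rw [hh]
    exact (hρdiff.comp (hφdiff.comp hAdiff)).smul
      (Tc.differentiable.comp (hσdiff.comp hAdiff))
  -- the potential function
  set R : ℝ → ℝ := fun s => ∫ t in (0:ℝ)..s, ρ t with hRdef
  have hRder : ∀ s, HasDerivAt R (ρ s) s := fun s =>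
    (hρdiff.continuous.integral_hasStrictDerivAt 0 s).hasDerivAt
  have hRdiff : Differentiable ℝ R := fun s => (hRder s).differentiableAt
  have hderivR : deriv R = ρ := funext fun s => (hRder s).deriv
  have hRmono : Monotone R :=
    monotone_of_deriv_nonneg hRdiff (by rw [hderivR]; exact hρnonneg)
  have hRconv : ConvexOn ℝ Set.univ R :=
    Monotone.convexOn_univ_of_deriv hRdiff (by rw [hderivR]; exact hρmono)
  set ψ : EuclideanSpace ℝ (Fin d) → ℝ :=
    fun x => R (φ (Matrix.toEuclideanLin W x + b)) with hψdef
  have hψconv : ConvexOn ℝ Set.univ ψ := by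
    refine ⟨convex_univ, ?_⟩
    intro x _ y _ a c ha hc hac
    obtain rfl : c = 1 - a := by linarith
    have hAcomb : Matrix.toEuclideanLin W (a • x + (1 - a) • y) + b =
        a • (Matrix.toEuclideanLin W x + b) + (1 - a) • (Matrix.toEuclideanLin W y + b) := by
      rw [_root_.map_add, _root_.map_smul, _root_.map_smul]
      module
    have h1 : φ (Matrix.toEuclideanLin W (a • x + (1 - a) • y) + b) ≤
        a * φ (Matrix.toEuclideanLin W x + b) + (1 - a) * φ (Matrix.toEuclideanLin W y + b) := by
      have h2 := hφconv.2 (Set.mem_univ (Matrix.toEuclideanLin W x + b))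
        (Set.mem_univ (Matrix.toEuclideanLin W y + b)) ha hc hac
      simp only [smul_eq_mul] at h2
      rw [hAcomb]
      exact h2
    calc ψ (a • x + (1 - a) • y)
        = R (φ (Matrix.toEuclideanLin W (a • x + (1 - a) • y) + b)) := rfl
      _ ≤ R (a * φ (Matrix.toEuclideanLin W x + b) +
            (1 - a) * φ (Matrix.toEuclideanLin W y + b)) := hRmono h1
      _ ≤ a • ψ x + (1 - a) • ψ y := by
          simpa [smul_eq_mul] using
            hRconv.2 (Set.mem_univ _) (Set.mem_univ _) ha hc hac
  have hψder : ∀ x, HasFDerivAt ψ (innerCLM d (h x)) x := by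
    intro x
    have h1 : HasFDerivAt (fun x => φ (Matrix.toEuclideanLin W x + b))
        ((fderiv ℝ φ (Matrix.toEuclideanLin W x + b)).comp Wc) x :=
      ((hφdiff _).hasFDerivAt).comp x (hAder x)
    have h2 : HasFDerivAt ψ
        (ρ (φ (Matrix.toEuclideanLin W x + b)) •
          ((fderiv ℝ φ (Matrix.toEuclideanLin W x + b)).comp Wc)) x :=
      (hRder _).comp_hasFDerivAt x h1
    convert h2 using 1
    ext u
    show ⟪h x, u⟫ = ρ (φ (Matrix.toEuclideanLin W x + b)) •
      (fderiv ℝ φ (Matrix.toEuclideanLin W x + b) (Wc u))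
    rw [hh, hgrad]
    simp only [hWc, LinearMap.coe_toContinuousLinearMap']
    rw [real_inner_smul_left, hadj, smul_eq_mul]
  -- monotonicity
  have hmono : ∀ x y, 0 ≤ ⟪h x - h y, x - y⟫ := by
    intro x y
    set g : ℝ → ℝ := fun t => ψ (x + t • (y - x)) with hgdef
    have hcder : ∀ t : ℝ, HasDerivAt (fun t : ℝ => x + t • (y - x)) (y - x) t := by
      intro t
      simpa using ((hasDerivAt_id t).smul_const (y - x)).const_add x
    have hgder : ∀ t : ℝ, HasDerivAt g (⟪h (x + t • (y - x)), y - x⟫) t := by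
      intro t
      have := (hψder (x + t • (y - x))).comp_hasDerivAt t (hcder t)
      exact this
    have hgconv : ConvexOn ℝ Set.univ g := by
      refine ⟨convex_univ, ?_⟩
      intro s _ t _ a c ha hc hac
      obtain rfl : c = 1 - a := by linarith
      have key : x + (a • s + (1 - a) • t) • (y - x) =
          a • (x + s • (y - x)) + (1 - a) • (x + t • (y - x)) := by
        simp only [smul_eq_mul]
        module
      calc g (a • s + (1 - a) • t)
          = ψ (a • (x + s • (y - x)) + (1 - a) • (x + t • (y - x))) := by rw [hgdef]; simp only; rw [key]
        _ ≤ a • ψ (x + s • (y - x)) + (1 - a) • ψ (x + t • (y - x)) :=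
            hψconv.2 (Set.mem_univ _) (Set.mem_univ _) ha hc hac
    have hg0 : HasDerivAt g (⟪h x, y - x⟫) 0 := by simpa using hgder 0
    have hg1 : HasDerivAt g (⟪h y, y - x⟫) 1 := by simpa using hgder 1
    have l1 : ⟪h x, y - x⟫ ≤ slope g 0 1 :=
      hgconv.le_slope_of_hasDerivAt (Set.mem_univ _) (Set.mem_univ _) one_pos hg0
    have l2 : slope g 0 1 ≤ ⟪h y, y - x⟫ :=
      hgconv.slope_le_of_hasDerivAt (Set.mem_univ _) (Set.mem_univ _) one_pos hg1
    have l3 : ⟪h x - h y, y - x⟫ ≤ 0 := by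
      rw [inner_sub_left]; linarith
    have e : ⟪h x - h y, x - y⟫ = -⟪h x - h y, y - x⟫ := by
      rw [show x - y = -(y - x) from (neg_sub y x).symm, inner_neg_right]
    rw [e]; linarith
  -- PSD
  have hpsd : ∀ x u, 0 ≤ ⟪fderiv ℝ h x u, u⟫ := by
    intro x u
    have hL : HasFDerivAt h (fderiv ℝ h x) x := (hhdiff x).hasFDerivAt
    have hc : ∀ t : ℝ, HasDerivAt (fun t : ℝ => x + t • u) u t := by
      intro t
      simpa using ((hasDerivAt_id t).smul_const u).const_add x
    have hL0 : HasFDerivAt h (fderiv ℝ h x) ((fun t : ℝ => x + t • u) 0) := by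
      simpa using hL
    have hcd : HasDerivAt (fun t : ℝ => h (x + t • u)) (fderiv ℝ h x u) 0 :=
      by have := hL0.comp_hasDerivAt 0 (hc 0); exact this
    have hts : Filter.Tendsto (slope (fun t : ℝ => h (x + t • u)) 0) (nhdsWithin 0 {(0:ℝ)}ᶜ)
        (nhds (fderiv ℝ h x u)) := hasDerivAt_iff_tendsto_slope.mp hcd
    have hinner : Filter.Tendsto
        (fun t => ⟪slope (fun t : ℝ => h (x + t • u)) 0 t, u⟫)
        (nhdsWithin 0 (Set.Ioi (0:ℝ))) (nhds ⟪fderiv ℝ h x u, u⟫) :=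
      (hts.inner tendsto_const_nhds).mono_left
        (nhdsWithin_mono 0 (fun t ht => ne_of_gt ht))
    refine ge_of_tendsto hinner ?_
    filter_upwards [self_mem_nhdsWithin] with t ht
    have ht' : (0:ℝ) < t := ht
    have h3 := hmono (x + t • u) x
    have e : (x + t • u) - x = t • u := by abel
    rw [e, real_inner_smul_right] at h3
    have h4 : 0 ≤ ⟪h (x + t • u) - h x, u⟫ := nonneg_of_mul_nonneg_right h3 ht'
    rw [slope_def_module]
    have e2 : x + (0:ℝ) • u = x := by simp
    rw [sub_zero, e2, real_inner_smul_left]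
    exact mul_nonneg (le_of_lt (inv_pos.mpr ht')) h4
  -- symmetry
  have hsymm : ∀ x u v, ⟪fderiv ℝ h x u, v⟫ = ⟪u, fderiv ℝ h x v⟫ := by
    intro x u v
    have hL : HasFDerivAt h (fderiv ℝ h x) x := (hhdiff x).hasFDerivAt
    have hf' : HasFDerivAt (fun y => innerCLM d (h y))
        ((innerCLM d).comp (fderiv ℝ h x)) x :=
      ((innerCLM d).hasFDerivAt).comp x hL
    have hsym := second_derivative_symmetric_of_eventually_of_real
      (Filter.Eventually.of_forall hψder) hf' u v
    simp only [ContinuousLinearMap.coe_comp', Function.comp_apply, innerCLM_apply] at hsym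
    rw [hsym, real_inner_comm]
  exact ⟨hsymm, hpsd, hmono⟩
end
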